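/- Let H ≥ 0 be a real number and set α = (√(1+H²) − H)². For nonnegative integers m, n define the weight w(m,n) = 1 if m = n = 0, w(m,n) = 2 if exactly one of m, n is 0, and w(m,n) = 4 if both m ≥ 1 and n ≥ 1. Let b be the greatest nonnegative integer strictly less than √(1 + exp(2·arsinh H)). Then the sum of w(m,n) over all pairs of nonnegative integers (m,n) satisfying m² + α·n² < 1 + α equals 3 + 2b. -/
import Mathlib


/-- The multiplicity weight: 1 if m = n = 0, 2 if exactly one of m, n is 0,
4 if both are positive. -/
def weight (p : ℕ × ℕ) : ℕ :=
  if p.1 = 0 ∧ p.2 = 0 then 1 else if p.1 = 0 ∨ p.2 = 0 then 2 else 4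

/-- The total multiplicity of the negative eigenvalues
`λ_{m,n} = m² + α n² − 1 − α` of the Jacobi operator of the flat CMC `H` torus of
revolution in `S³` equals `3 + 2b`, where `b` is the greatest nonnegative integer
strictly less than `√(1 + exp(2 arsinh H))`. -/
theorem flat_cmc_torus_index (H : ℝ) (hH : 0 ≤ H) (α : ℝ)
    (hα : α = (Real.sqrt (1 + H ^ 2) - H) ^ 2) (b : ℕ)
    (hb : (b : ℝ) < Real.sqrt (1 + Real.exp (2 * Real.arsinh H)))
    (hb' : ∀ b' : ℕ, (b' : ℝ) < Real.sqrt (1 + Real.exp (2 * Real.arsinh H)) → b' ≤ b) :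
    (∑ᶠ p : ℕ × ℕ,
      if (p.1 : ℝ) ^ 2 + α * (p.2 : ℝ) ^ 2 < 1 + α then weight p else 0) = 3 + 2 * b := by
  have h1H : (0:ℝ) ≤ 1 + H ^ 2 := by positivity
  set s := Real.sqrt (1 + H ^ 2) with hs_def
  have hs2 : s ^ 2 = 1 + H ^ 2 := Real.sq_sqrt h1H
  have hs0 : 0 ≤ s := Real.sqrt_nonneg _
  have hsH : H < s := by nlinarith
  have hα0 : 0 < α := by rw [hα]; exact pow_pos (by linarith) 2
  have hα1 : α ≤ 1 := by rw [hα]; nlinarith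
  set E := Real.exp (2 * Real.arsinh H) with hE_def
  have hE : E = (H + s) ^ 2 := by
    rw [hE_def, two_mul, Real.exp_add, Real.exp_arsinh]; ring
  have hαE : α * E = 1 := by rw [hα, hE]; nlinarith
  have hb2 : (b : ℝ) ^ 2 < 1 + E := by
    rw [← Real.lt_sqrt (by positivity)]; exact hb
  -- key characterization for pairs (0, n)
  have cond0 : ∀ n : ℕ, α * (n : ℝ) ^ 2 < 1 + α ↔ n ≤ b := by
    intro n
    constructor
    · intro h
      refine hb' n ?_
      rw [Real.lt_sqrt (by positivity)]
      nlinarith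
    · intro h
      have : (n : ℝ) ≤ (b : ℝ) := by exact_mod_cast h
      nlinarith [Nat.cast_nonneg (α := ℝ) n]
  set f : ℕ × ℕ → ℕ := fun p =>
      if (p.1 : ℝ) ^ 2 + α * (p.2 : ℝ) ^ 2 < 1 + α then weight p else 0 with hf
  have hsupp : Function.support f ⊆ ↑(Finset.range 2 ×ˢ Finset.range (b + 1)) := by
    intro p hp
    simp only [Function.mem_support, hf] at hp
    by_cases hc : (p.1 : ℝ) ^ 2 + α * (p.2 : ℝ) ^ 2 < 1 + α
    · simp only [Finset.coe_product, Set.mem_prod, Finset.mem_coe, Finset.mem_range]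
      constructor
      · by_contra h
        push_neg at h
        have : (2 : ℝ) ≤ (p.1 : ℝ) := by exact_mod_cast h
        nlinarith [sq_nonneg ((p.2 : ℝ)), mul_nonneg hα0.le (sq_nonneg ((p.2 : ℝ)))]
      · have : α * (p.2 : ℝ) ^ 2 < 1 + α := by nlinarith [sq_nonneg ((p.1 : ℝ))]
        have := (cond0 p.2).mp this
        omega
    · simp [hc] at hp
  rw [finsum_eq_finset_sum_of_support_subset f hsupp, Finset.sum_product]
  rw [show (2 : ℕ) = 1 + 1 from rfl, Finset.sum_range_succ, Finset.sum_range_one]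
  have hA : ∑ n ∈ Finset.range (b + 1), f (0, n) = 1 + 2 * b := by
    rw [Finset.sum_range_succ']
    have h0 : f (0, 0) = 1 := by
      simp only [hf, weight]
      norm_num
      linarith
    have hstep : ∀ i ∈ Finset.range b, f (0, i + 1) = 2 := by
      intro i hi
      simp only [Finset.mem_range] at hi
      have hcond : α * ((i : ℝ) + 1) ^ 2 < 1 + α := by
        have := (cond0 (i + 1)).mpr (by omega)
        push_cast at this
        linarith
      simp only [hf, weight]
      norm_num
      exact hcond
    rw [Finset.sum_congr rfl hstep, h0, Finset.sum_const, Finset.card_range]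
    ring
  have hB : ∑ n ∈ Finset.range (b + 1), f (1, n) = 2 := by
    rw [Finset.sum_range_succ']
    have h0 : f (1, 0) = 2 := by
      simp only [hf, weight]
      norm_num
      linarith
    have hstep : ∀ i ∈ Finset.range b, f (1, i + 1) = 0 := by
      intro i _
      have hcond : ¬ ((1 : ℝ) ^ 2 + α * ((i : ℝ) + 1) ^ 2 < 1 + α) := by
        push_neg
        have : (1 : ℝ) ≤ ((i : ℝ) + 1) ^ 2 := by nlinarith [Nat.cast_nonneg (α := ℝ) i]
        nlinarith
      simp only [hf]
      push_cast
      rw [if_neg hcond]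
    rw [Finset.sum_congr rfl hstep, h0, Finset.sum_const]
    simp
  simp only [hf] at hA hB ⊢
  rw [hA, hB]
  ring
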